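/- Let X ⊆ ℝ^d be finite, let W ⊆ ℝ^d be a subspace, and for z in Z = Π_{W^⊥}(X) write ⟦z⟧ = {x ∈ X : Π_{W^⊥}(x) = z}, where Π_{W^⊥} is orthogonal projection onto W^⊥. Fix u* ∈ ℝ^d and set ⟦0⟧* = {x ∈ ⟦0⟧ : ⟨x, u*⟩ = 0}. Then there exists T'' ⊆ X with |T''| ≤ 2|Z| such that |(⟦0⟧ + T'') \ (X + ⟦0⟧*)| ≥ |Z|·(|⟦0⟧| − |⟦0⟧*|). -/

import Mathlib

open Classical Pointwise

/-- Orthogonal projection of `x` onto `W^⊥`, viewed inside `ℝ^d`. -/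
noncomputable def projPerp {d : ℕ} (W : Submodule ℝ (EuclideanSpace ℝ (Fin d)))
    (x : EuclideanSpace ℝ (Fin d)) : EuclideanSpace ℝ (Fin d) :=
  ((Wᗮ.orthogonalProjection x : Wᗮ) : EuclideanSpace ℝ (Fin d))

/-- The set of nonempty fibres: the image of `X` under projection onto `W^⊥`. -/
noncomputable def projSet {d : ℕ} (X : Finset (EuclideanSpace ℝ (Fin d)))
    (W : Submodule ℝ (EuclideanSpace ℝ (Fin d))) : Finset (EuclideanSpace ℝ (Fin d)) :=
  X.image (projPerp W)

/-- The fibre of `X` over `z`. -/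
noncomputable def fibre {d : ℕ} (X : Finset (EuclideanSpace ℝ (Fin d)))
    (W : Submodule ℝ (EuclideanSpace ℝ (Fin d))) (z : EuclideanSpace ℝ (Fin d)) :
    Finset (EuclideanSpace ℝ (Fin d)) :=
  X.filter fun x => projPerp W x = z

lemma projPerp_add {d : ℕ} (W : Submodule ℝ (EuclideanSpace ℝ (Fin d)))
    (x y : EuclideanSpace ℝ (Fin d)) :
    projPerp W (x + y) = projPerp W x + projPerp W y := by
  simp [projPerp]

/-- Offsetting the loss of the zero fibre: there is `T'' ⊆ X` with `|T''| ≤ 2|Z|`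
and `|(⟦0⟧ + T'') \ (X + ⟦0⟧*)| ≥ |Z|·(|⟦0⟧| − |⟦0⟧*|)`. -/
theorem offset_zero_fibre (d : ℕ) (X : Finset (EuclideanSpace ℝ (Fin d)))
    (W : Submodule ℝ (EuclideanSpace ℝ (Fin d))) (ustar : EuclideanSpace ℝ (Fin d)) :
    ∃ T'' ⊆ X, T''.card ≤ 2 * (projSet X W).card ∧
      (projSet X W).card *
          ((fibre X W 0).card - ((fibre X W 0).filter fun x => (inner ℝ x ustar : ℝ) = 0).card) ≤
        (((fibre X W 0) + T'') \
          (X + (fibre X W 0).filter fun x => (inner ℝ x ustar : ℝ) = 0)).card := by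
  classical
  set Z := projSet X W with hZdef
  set F0 := fibre X W 0 with hF0def
  set S := F0.filter (fun x => (inner ℝ x ustar : ℝ) = 0) with hSdef
  have hSF : S ⊆ F0 := Finset.filter_subset _ _
  have hfib : ∀ z ∈ Z, (fibre X W z).Nonempty := by
    intro z hz
    obtain ⟨x, hx, hxz⟩ := Finset.mem_image.mp hz
    exact ⟨x, Finset.mem_filter.mpr ⟨hx, hxz⟩⟩
  have hmaxE : ∀ z ∈ Z, ∃ t ∈ fibre X W z, ∀ a ∈ fibre X W z,
      (inner ℝ a ustar : ℝ) ≤ inner ℝ t ustar :=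
    fun z hz => Finset.exists_max_image _ _ (hfib z hz)
  have hminE : ∀ z ∈ Z, ∃ t ∈ fibre X W z, ∀ a ∈ fibre X W z,
      (inner ℝ t ustar : ℝ) ≤ inner ℝ a ustar :=
    fun z hz => Finset.exists_min_image _ _ (hfib z hz)
  choose! m hmMem hmMax using hmaxE
  choose! n hnMem hnMin using hminE
  refine ⟨Z.image m ∪ Z.image n, ?_, ?_, ?_⟩
  · intro t ht
    rcases Finset.mem_union.mp ht with h | h <;>
    · obtain ⟨z, hz, rfl⟩ := Finset.mem_image.mp h
      first
        | exact (Finset.mem_filter.mp (hmMem z hz)).1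
        | exact (Finset.mem_filter.mp (hnMem z hz)).1
  · calc (Z.image m ∪ Z.image n).card ≤ (Z.image m).card + (Z.image n).card :=
          Finset.card_union_le _ _
      _ ≤ Z.card + Z.card := Nat.add_le_add (Finset.card_image_le) (Finset.card_image_le)
      _ = 2 * Z.card := (two_mul _).symm
  · set T := Z.image m ∪ Z.image n with hTdef
    set D := F0 \ S with hDdef
    have hcard : F0.card - S.card = D.card := (Finset.card_sdiff_of_subset hSF).symm
    rw [hcard]
    have hprod : (Z ×ˢ D).card = Z.card * D.card := Finset.card_product _ _
    rw [← hprod]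
    apply Finset.card_le_card_of_injOn
      (fun p => p.2 + (if 0 < (inner ℝ p.2 ustar : ℝ) then m p.1 else n p.1))
    · intro p hp
      obtain ⟨hz, hx⟩ := Finset.mem_product.mp hp
      obtain ⟨hxF0, hxS⟩ := Finset.mem_sdiff.mp hx
      have hxproj : projPerp W p.2 = 0 := (Finset.mem_filter.mp hxF0).2
      have hxX : p.2 ∈ X := (Finset.mem_filter.mp hxF0).1
      have hxinner : (inner ℝ p.2 ustar : ℝ) ≠ 0 := by
        intro h; exact hxS (Finset.mem_filter.mpr ⟨hxF0, h⟩)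
      set t := (if 0 < (inner ℝ p.2 ustar : ℝ) then m p.1 else n p.1) with htdef
      have htfib : t ∈ fibre X W p.1 := by
        rw [htdef]; split
        · exact hmMem p.1 hz
        · exact hnMem p.1 hz
      have htproj : projPerp W t = p.1 := (Finset.mem_filter.mp htfib).2
      have htT : t ∈ T := by
        rw [htdef]; split
        · exact Finset.mem_union_left _ (Finset.mem_image_of_mem _ hz)
        · exact Finset.mem_union_right _ (Finset.mem_image_of_mem _ hz)
      rw [Finset.mem_coe, Finset.mem_sdiff]
      constructor
      · exact Finset.add_mem_add hxF0 htT
      · intro hmem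
        obtain ⟨a, ha, b, hb, hab⟩ := Finset.mem_add.mp hmem
        have hbF : b ∈ F0 := hSF hb
        have hbproj : projPerp W b = 0 := (Finset.mem_filter.mp hbF).2
        have hbinner : (inner ℝ b ustar : ℝ) = 0 := (Finset.mem_filter.mp hb).2
        have haproj : projPerp W a = p.1 := by
          have h1 : projPerp W (a + b) = projPerp W (p.2 + t) := by rw [hab]
          rw [projPerp_add, projPerp_add, hbproj, hxproj, htproj, add_zero, zero_add] at h1
          exact h1
        have hafib : a ∈ fibre X W p.1 := Finset.mem_filter.mpr ⟨ha, haproj⟩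
        have hinner : (inner ℝ a ustar : ℝ) = inner ℝ p.2 ustar + inner ℝ t ustar := by
          have h1 : (inner ℝ (a + b) ustar : ℝ) = inner ℝ (p.2 + t) ustar := by rw [hab]
          rw [inner_add_left, inner_add_left, hbinner, add_zero] at h1
          exact h1
        rw [htdef] at hinner
        by_cases hpos : 0 < (inner ℝ p.2 ustar : ℝ)
        · rw [if_pos hpos] at hinner
          have := hmMax p.1 hz a hafib
          linarith
        · have hneg : (inner ℝ p.2 ustar : ℝ) < 0 := lt_of_le_of_ne (not_lt.mp hpos) hxinner
          rw [if_neg hpos] at hinner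
          have := hnMin p.1 hz a hafib
          linarith
    · intro p hp q hq heq
      obtain ⟨hpz, hpx⟩ := Finset.mem_product.mp hp
      obtain ⟨hqz, hqx⟩ := Finset.mem_product.mp hq
      obtain ⟨hpF0, hpS⟩ := Finset.mem_sdiff.mp hpx
      obtain ⟨hqF0, hqS⟩ := Finset.mem_sdiff.mp hqx
      have hpproj : projPerp W p.2 = 0 := (Finset.mem_filter.mp hpF0).2
      have hqproj : projPerp W q.2 = 0 := (Finset.mem_filter.mp hqF0).2
      have hpinner : (inner ℝ p.2 ustar : ℝ) ≠ 0 := by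
        intro h; exact hpS (Finset.mem_filter.mpr ⟨hpF0, h⟩)
      have hqinner : (inner ℝ q.2 ustar : ℝ) ≠ 0 := by
        intro h; exact hqS (Finset.mem_filter.mpr ⟨hqF0, h⟩)
      set tp := (if 0 < (inner ℝ p.2 ustar : ℝ) then m p.1 else n p.1) with htp
      set tq := (if 0 < (inner ℝ q.2 ustar : ℝ) then m q.1 else n q.1) with htq
      have htpfib : tp ∈ fibre X W p.1 := by
        rw [htp]; split
        · exact hmMem p.1 hpz
        · exact hnMem p.1 hpz
      have htqfib : tq ∈ fibre X W q.1 := by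
        rw [htq]; split
        · exact hmMem q.1 hqz
        · exact hnMem q.1 hqz
      have heq' : p.2 + tp = q.2 + tq := heq
      have hz12 : p.1 = q.1 := by
        have h1 : projPerp W (p.2 + tp) = projPerp W (q.2 + tq) := by rw [heq']
        rw [projPerp_add, projPerp_add, hpproj, hqproj, zero_add, zero_add,
          (Finset.mem_filter.mp htpfib).2, (Finset.mem_filter.mp htqfib).2] at h1
        exact h1
      have hinn : (inner ℝ p.2 ustar : ℝ) + inner ℝ tp ustar
          = (inner ℝ q.2 ustar : ℝ) + inner ℝ tq ustar := by
        have h1 : (inner ℝ (p.2 + tp) ustar : ℝ) = inner ℝ (q.2 + tq) ustar := by rw [heq']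
        rwa [inner_add_left, inner_add_left] at h1
      have hx12 : p.2 = q.2 := by
        by_cases hp' : 0 < (inner ℝ p.2 ustar : ℝ) <;> by_cases hq' : 0 < (inner ℝ q.2 ustar : ℝ)
        · have : tp = tq := by rw [htp, htq, if_pos hp', if_pos hq', hz12]
          rw [this] at heq'
          exact add_right_cancel heq'
        · exfalso
          have hqneg : (inner ℝ q.2 ustar : ℝ) < 0 := lt_of_le_of_ne (not_lt.mp hq') hqinner
          rw [htp, htq, if_pos hp', if_neg hq'] at hinn
          have h1 := hnMin q.1 hqz (m p.1) (hz12 ▸ hmMem p.1 hpz)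
          linarith
        · exfalso
          have hpneg : (inner ℝ p.2 ustar : ℝ) < 0 := lt_of_le_of_ne (not_lt.mp hp') hpinner
          rw [htp, htq, if_neg hp', if_pos hq'] at hinn
          have h1 := hnMin p.1 hpz (m q.1) (hz12.symm ▸ hmMem q.1 hqz)
          linarith
        · have : tp = tq := by rw [htp, htq, if_neg hp', if_neg hq', hz12]
          rw [this] at heq'
          exact add_right_cancel heq'
      exact Prod.ext hz12 hx12
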